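/- Let H be a finite abelian group, K = (ℤ/2ℤ)^l, G = H × K, and x : G → ℤ. For a character χ of K (a homomorphism K → ℂˣ, necessarily taking values in {±1}), set α_χ := det (fun (h h' : H) => ∑_{k ∈ K} χ(k) * x((h * h'⁻¹, k))), which is an integer. Then for every character χ of K, α_χ ≡ α_{χ₁} (mod 2), where χ₁ is the trivial character of K. -/

import Mathlib

/-- Let `H` be a finite abelian group, `K = (ℤ/2ℤ)^l`, and `x : H × K → ℤ`.
For a character `χ : K →* ℂˣ` (necessarily taking values in `{±1}`), set
`α_χ := det (fun h h' => ∑ k ∈ K, χ(k) · x(h h'⁻¹, k))`, an integer. Then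
`α_χ ≡ α_{χ₁} (mod 2)` where `χ₁` is the trivial character: their difference
is `2 m` for some integer `m`. -/
theorem alpha_chi_congruent_mod_two
    (H : Type*) [CommGroup H] [Fintype H] [DecidableEq H] (l : ℕ)
    (x : H × Multiplicative (Fin l → ZMod 2) → ℤ)
    (χ : Multiplicative (Fin l → ZMod 2) →* ℂˣ) :
    ∃ m : ℤ,
      Matrix.det (Matrix.of fun h h' : H =>
        ∑ k : Multiplicative (Fin l → ZMod 2), (χ k : ℂ) * (x (h * h'⁻¹, k) : ℂ)) -
      Matrix.det (Matrix.of fun h h' : H =>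
        ∑ k : Multiplicative (Fin l → ZMod 2),
          (((1 : Multiplicative (Fin l → ZMod 2) →* ℂˣ) k : ℂˣ) : ℂ) * (x (h * h'⁻¹, k) : ℂ))
      = 2 * (m : ℂ) := by
  classical
  -- every χ k is ±1
  have hsq : ∀ k : Multiplicative (Fin l → ZMod 2), (χ k : ℂ) = 1 ∨ (χ k : ℂ) = -1 := by
    intro k
    have hk : k * k = 1 := by
      have h0 : (Multiplicative.toAdd k) + (Multiplicative.toAdd k) = 0 := by
        funext i
        exact CharTwo.add_self_eq_zero _
      have := congrArg Multiplicative.ofAdd h0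
      simpa using this
    have hmul : (χ k : ℂ) * (χ k : ℂ) = 1 := by
      have := congrArg (fun u : ℂˣ => (u : ℂ)) (show χ k * χ k = 1 by rw [← map_mul, hk, map_one])
      simpa using this
    exact mul_self_eq_one_iff.mp hmul
  -- integer sign
  set ε : Multiplicative (Fin l → ZMod 2) → ℤ :=
    fun k => if (χ k : ℂ) = 1 then 1 else -1 with hε
  have hεc : ∀ k, ((ε k : ℤ) : ℂ) = (χ k : ℂ) := by
    intro k
    simp only [hε]
    split_ifs with h1
    · simp [h1]
    · rcases hsq k with h | h
      · exact absurd h h1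
      · simp [h]
  -- integer matrices
  set A : Matrix H H ℤ :=
    Matrix.of fun h h' : H => ∑ k : Multiplicative (Fin l → ZMod 2), ε k * x (h * h'⁻¹, k) with hA
  set B : Matrix H H ℤ :=
    Matrix.of fun h h' : H => ∑ k : Multiplicative (Fin l → ZMod 2), x (h * h'⁻¹, k) with hB
  have hAdet : Matrix.det (Matrix.of fun h h' : H =>
      ∑ k : Multiplicative (Fin l → ZMod 2), (χ k : ℂ) * (x (h * h'⁻¹, k) : ℂ))
      = ((A.det : ℤ) : ℂ) := by
    have heq : (Matrix.of fun h h' : H =>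
        ∑ k : Multiplicative (Fin l → ZMod 2), (χ k : ℂ) * (x (h * h'⁻¹, k) : ℂ))
        = A.map (Int.castRingHom ℂ) := by
      ext h h'
      simp only [Matrix.map_apply, hA, Matrix.of_apply, map_sum, map_mul, eq_intCast]
      refine Finset.sum_congr rfl fun k _ => ?_
      rw [hεc]
    rw [heq]
    have := (Int.castRingHom ℂ).map_det A
    simpa [RingHom.mapMatrix_apply] using this.symm
  have hBdet : Matrix.det (Matrix.of fun h h' : H =>
      ∑ k : Multiplicative (Fin l → ZMod 2),
        (((1 : Multiplicative (Fin l → ZMod 2) →* ℂˣ) k : ℂˣ) : ℂ) * (x (h * h'⁻¹, k) : ℂ))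
      = ((B.det : ℤ) : ℂ) := by
    have heq : (Matrix.of fun h h' : H =>
        ∑ k : Multiplicative (Fin l → ZMod 2),
          (((1 : Multiplicative (Fin l → ZMod 2) →* ℂˣ) k : ℂˣ) : ℂ) * (x (h * h'⁻¹, k) : ℂ))
        = B.map (Int.castRingHom ℂ) := by
      ext h h'
      simp only [Matrix.map_apply, hB, Matrix.of_apply, map_sum, map_mul, eq_intCast]
      refine Finset.sum_congr rfl fun k _ => ?_
      simp
    rw [heq]
    have := (Int.castRingHom ℂ).map_det B
    simpa [RingHom.mapMatrix_apply] using this.symm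
  -- mod 2 congruence
  have hdvd : (2 : ℤ) ∣ (A.det - B.det) := by
    have hmap : A.map (Int.castRingHom (ZMod 2)) = B.map (Int.castRingHom (ZMod 2)) := by
      ext h h'
      simp only [Matrix.map_apply, hA, hB, Matrix.of_apply, map_sum, map_mul, eq_intCast]
      refine Finset.sum_congr rfl fun k _ => ?_
      have h1 : ((ε k : ℤ) : ZMod 2) = 1 := by
        simp only [hε]
        split_ifs <;> decide
      rw [h1, one_mul]
    have hdeq : ((A.det : ℤ) : ZMod 2) = ((B.det : ℤ) : ZMod 2) := by
      have h1 := (Int.castRingHom (ZMod 2)).map_det A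
      have h2 := (Int.castRingHom (ZMod 2)).map_det B
      simp only [RingHom.mapMatrix_apply] at h1 h2
      rw [show ((A.det : ℤ) : ZMod 2) = (Int.castRingHom (ZMod 2)) A.det from rfl,
        show ((B.det : ℤ) : ZMod 2) = (Int.castRingHom (ZMod 2)) B.det from rfl, h1, h2, hmap]
    have h0 : (((A.det - B.det : ℤ)) : ZMod 2) = 0 := by rw [Int.cast_sub]; rw [hdeq]; ring
    exact (ZMod.intCast_zmod_eq_zero_iff_dvd _ 2).mp h0
  obtain ⟨m, hm⟩ := hdvd
  refine ⟨m, ?_⟩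
  rw [hAdet, hBdet, ← Int.cast_sub, hm]
  push_cast
  ring
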